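/- If G is a connected graph with γ_P(G) = Z(G), and H is a connected graph with γ(H) = 1 (i.e., H has a dominating vertex), then γ_P(G □ H) = Z(G). -/

import Mathlib

namespace PaperPD

open SimpleGraph

variable {V : Type} {W : Type}

/-- Observation process for power domination on a simple graph. -/
inductive Observed (G : SimpleGraph V) (S : Set V) : V → Prop
  | mem : ∀ v ∈ S, Observed G S v
  | dom : ∀ u v, u ∈ S → G.Adj u v → Observed G S v
  | prop : ∀ u v, Observed G S u → G.Adj u v →
      (∀ w, G.Adj u w → w ≠ v → Observed G S w) → Observed G S v

/-- `S` is a power dominating set of `G`. -/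
def IsPDS (G : SimpleGraph V) (S : Set V) : Prop := ∀ v, Observed G S v

/-- Power domination number. -/
noncomputable def pdNum (G : SimpleGraph V) [Fintype V] : ℕ :=
  sInf {n | ∃ S : Finset V, S.card = n ∧ IsPDS G ↑S}

/-- Zero forcing process. -/
inductive Forced (G : SimpleGraph V) (S : Set V) : V → Prop
  | mem : ∀ v ∈ S, Forced G S v
  | prop : ∀ u v, Forced G S u → G.Adj u v →
      (∀ w, G.Adj u w → w ≠ v → Forced G S w) → Forced G S v

/-- Zero forcing number. -/
noncomputable def zNum (G : SimpleGraph V) [Fintype V] : ℕ :=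
  sInf {n | ∃ S : Finset V, S.card = n ∧ ∀ v, Forced G S v}

/-- Domination number. -/
noncomputable def domNum (G : SimpleGraph V) [Fintype V] : ℕ :=
  sInf {n | ∃ S : Finset V, S.card = n ∧ ∀ v, ∃ u ∈ S, v = u ∨ G.Adj u v}

/-- No induced `K_{1,3}`. -/
def ClawFree (G : SimpleGraph V) : Prop :=
  ∀ x a b c : V, a ≠ b → a ≠ c → b ≠ c →
    G.Adj x a → G.Adj x b → G.Adj x c →
    ¬ G.Adj a b → ¬ G.Adj a c → ¬ G.Adj b c → False

/-- No induced `K₄` minus an edge. -/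
def DiamondFree (G : SimpleGraph V) : Prop :=
  ∀ a b c d : V, a ≠ b → a ≠ c → a ≠ d → b ≠ c → b ≠ d → c ≠ d →
    G.Adj a b → G.Adj a c → G.Adj b c → G.Adj b d → G.Adj c d →
    ¬ G.Adj a d → False

/-- A leaf: a vertex with exactly one neighbor. -/
def IsLeaf (G : SimpleGraph V) (v : V) : Prop := ∃! u, G.Adj v u

/-- A strong support vertex: adjacent to at least two leaves. -/
def IsStrongSupport (G : SimpleGraph V) (x : V) : Prop :=
  ∃ a b, a ≠ b ∧ G.Adj x a ∧ G.Adj x b ∧ IsLeaf G a ∧ IsLeaf G b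

/-- Number of strong support vertices. -/
noncomputable def ssCount (G : SimpleGraph V) : ℕ :=
  Nat.card {v // IsStrongSupport G v}

/-- Connected with no bridges. -/
def TwoEdgeConnected (G : SimpleGraph V) : Prop :=
  G.Connected ∧ ∀ e, ¬ G.IsBridge e

/-- A loopless multigraph, given by symmetric edge multiplicities. -/
structure Multigraph (W : Type) where
  mult : W → W → ℕ
  symm : ∀ u v, mult u v = mult v u
  loopless : ∀ v, mult v v = 0

/-- Underlying simple graph of a multigraph. -/
def Multigraph.toSimple (M : Multigraph W) : SimpleGraph W where
  Adj u v := u ≠ v ∧ 0 < M.mult u v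
  symm := by refine ⟨?_⟩; intro u v h; exact ⟨h.1.symm, by rw [M.symm]; exact h.2⟩
  loopless := by refine ⟨?_⟩; intro v h; exact h.1 rfl

/-- Degree of a vertex in a multigraph (counting multiplicities). -/
def Multigraph.degree [Fintype W] (M : Multigraph W) (v : W) : ℕ :=
  ∑ u, M.mult v u

/-- Bridgeless multigraph: no single edge is a cut edge (a parallel edge
is never a bridge). -/
def Multigraph.Bridgeless (M : Multigraph W) : Prop :=
  ∀ u v, M.mult u v = 1 → ¬ M.toSimple.IsBridge s(u, v)

/-- A 2-factor of a multigraph, given by sub-multiplicities. -/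
def Multigraph.IsTwoFactor [Fintype W] (M : Multigraph W) (f : W → W → ℕ) : Prop :=
  (∀ u v, f u v ≤ M.mult u v) ∧ (∀ u v, f u v = f v u) ∧ (∀ v, ∑ u, f v u = 2)

/-- Observation process for power domination on a multigraph: propagation
only happens along single edges. -/
inductive MObserved (M : Multigraph W) (S : Set W) : W → Prop
  | mem : ∀ v ∈ S, MObserved M S v
  | dom : ∀ u v, u ∈ S → 0 < M.mult u v → MObserved M S v
  | prop : ∀ u v, MObserved M S u → M.mult u v = 1 →
      (∀ w, 0 < M.mult u w → w ≠ v → MObserved M S w) → MObserved M S v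

/-- Power domination number of a multigraph. -/
noncomputable def mpdNum (M : Multigraph W) [Fintype W] : ℕ :=
  sInf {n | ∃ S : Finset W, S.card = n ∧ ∀ v, MObserved M ↑S v}

/-- Projection of an observed vertex of a box product is observed in the base. -/
lemma observed_proj {V W : Type} (G : SimpleGraph V) (H : SimpleGraph W)
    (S : Set (V × W)) (x : V × W) (hx : Observed (G.boxProd H) S x) :
    Observed G (Prod.fst '' S) x.1 := by
  induction hx with
  | mem v hv => exact Observed.mem v.1 ⟨v, hv, rfl⟩
  | dom u v hu hadj =>
    rcases hadj with ⟨hGadj, _⟩ | ⟨_, h1⟩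
    · exact Observed.dom u.1 v.1 ⟨u, hu, rfl⟩ hGadj
    · rw [← h1]; exact Observed.mem u.1 ⟨u, hu, rfl⟩
  | prop u v _ hadj hside ihu ihside =>
    rcases hadj with ⟨hGadj, h2⟩ | ⟨_, h1⟩
    · refine Observed.prop u.1 v.1 ihu hGadj ?_
      intro w hw hwv
      have hne : (w, u.2) ≠ v := by
        intro h; apply hwv; rw [← h]
      have := ihside (w, u.2) (Or.inl ⟨hw, rfl⟩) hne
      exact this
    · rw [← h1]; exact ihu

/-- Lifting a forced vertex to the box product with a dominating vertex. -/
lemma forced_lift {V W : Type} (G : SimpleGraph V) (H : SimpleGraph W)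
    (Z : Finset V) (w : W) (hw : ∀ h, h = w ∨ H.Adj w h)
    (g : V) (hg : Forced G ↑Z g) (h : W) :
    Observed (G.boxProd H) ↑(Z ×ˢ ({w} : Finset W)) (g, h) := by
  have hvmem : ∀ v ∈ Z, ∀ h' : W, ((v, h') : V × W) ∈ (↑(Z ×ˢ ({h'} : Finset W)) : Set (V × W)) := by
    intro v hv h'
    simp [hv]
  induction hg generalizing h with
  | mem v hv =>
    have hv' : v ∈ Z := hv
    rcases hw h with rfl | hadj
    · exact Observed.mem (v, h) (by simp [hv'])
    · exact Observed.dom (v, w) (v, h) (by simp [hv']) (Or.inr ⟨hadj, rfl⟩)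
  | prop u v _ hadj hside ihu ihside =>
    refine Observed.prop (u, h) (v, h) (ihu h) (Or.inl ⟨hadj, rfl⟩) ?_
    rintro ⟨x1, x2⟩ hxadj hxne
    rcases hxadj with ⟨hGadj, h2⟩ | ⟨hHadj, h1⟩
    · dsimp at h2; subst h2
      have hx1v : x1 ≠ v := by rintro rfl; exact hxne rfl
      exact ihside x1 hGadj hx1v h
    · dsimp at h1; subst h1
      exact ihu x2

theorem stmt15 {V W : Type} [Fintype V] [Fintype W]
    (G : SimpleGraph V) (H : SimpleGraph W)
    (hG : G.Connected) (hH : H.Connected)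
    (he : pdNum G = zNum G) (hdom : domNum H = 1) :
    pdNum (G.boxProd H) = zNum G := by
  classical
  -- obtain a minimum zero forcing set of G
  have hZne : {n | ∃ S : Finset V, S.card = n ∧ ∀ v, Forced G ↑S v}.Nonempty :=
    ⟨Finset.univ.card, Finset.univ, rfl, fun v => Forced.mem v (by simp)⟩
  obtain ⟨Z, hZcard, hZforce⟩ : ∃ S : Finset V, S.card = zNum G ∧ ∀ v, Forced G ↑S v :=
    Nat.sInf_mem hZne
  -- obtain a dominating vertex of H
  have hDne : {n | ∃ S : Finset W, S.card = n ∧ ∀ v, ∃ u ∈ S, v = u ∨ H.Adj u v}.Nonempty :=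
    ⟨Finset.univ.card, Finset.univ, rfl, fun v => ⟨v, by simp⟩⟩
  obtain ⟨D, hDcard, hDdom⟩ : ∃ S : Finset W, S.card = domNum H ∧
      ∀ v, ∃ u ∈ S, v = u ∨ H.Adj u v := Nat.sInf_mem hDne
  rw [hdom, Finset.card_eq_one] at hDcard
  obtain ⟨w, rfl⟩ := hDcard
  have hw : ∀ h, h = w ∨ H.Adj w h := by
    intro h
    obtain ⟨u, hu, huh⟩ := hDdom h
    simp only [Finset.mem_singleton] at hu
    subst hu
    exact huh
  -- upper bound
  have hub : pdNum (G.boxProd H) ≤ zNum G := by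
    have hmem : zNum G ∈
        {n | ∃ S : Finset (V × W), S.card = n ∧ IsPDS (G.boxProd H) ↑S} := by
      refine ⟨Z ×ˢ ({w} : Finset W), by simp [hZcard], ?_⟩
      rintro ⟨g, h⟩
      exact forced_lift G H Z w hw g (hZforce g) h
    exact Nat.sInf_le hmem
  -- lower bound
  have hPne : {n | ∃ S : Finset (V × W), S.card = n ∧ IsPDS (G.boxProd H) ↑S}.Nonempty :=
    ⟨Finset.univ.card, Finset.univ, rfl, fun v => Observed.mem v (by simp)⟩
  obtain ⟨S, hScard, hSpds⟩ : ∃ S : Finset (V × W), S.card = pdNum (G.boxProd H) ∧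
      IsPDS (G.boxProd H) ↑S := Nat.sInf_mem hPne
  have hlb : zNum G ≤ pdNum (G.boxProd H) := by
    rw [← he]
    have hpds : IsPDS G ↑(S.image Prod.fst) := by
      intro v
      have := observed_proj G H ↑S (v, w) (hSpds (v, w))
      rw [Finset.coe_image]; exact this
    calc pdNum G ≤ (S.image Prod.fst).card := Nat.sInf_le ⟨S.image Prod.fst, rfl, hpds⟩
      _ ≤ S.card := Finset.card_image_le
      _ = pdNum (G.boxProd H) := hScard
  exact le_antisymm hub hlb

end PaperPD
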